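/- Let U be a square-integrable real-valued random variable taking values in L with g(U, τ(V)) integrable, and suppose x ↦ g(x,t) is strictly convex for every t ∈ L. If E[ g(U, τ(V)) ∥ σ(V) ] = g( E[U ∥ σ(V)], τ(V) ) almost everywhere, then U = E[U ∥ σ(V)] almost everywhere; in particular U is almost surely a measurable function of V. -/

import Mathlib

open MeasureTheory ProbabilityTheory Filter Set Topology

private lemma subgrad_strict' {s : Set ℝ} (hs : s.OrdConnected) {f : ℝ → ℝ}
    (hf : StrictConvexOn ℝ s f) {y c : ℝ} (hy : y ∈ s)
    (H1 : ∀ x ∈ s, y < x → c ≤ (f x - f y) / (x - y))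
    (H2 : ∀ x ∈ s, x < y → (f x - f y) / (x - y) ≤ c) :
    ∀ u ∈ s, u ≠ y → c * (u - y) < f u - f y := by
  intro u hu hne
  rcases lt_or_gt_of_ne hne with hlt | hgt
  · have hw1 : u < (u + y) / 2 := by linarith
    have hw2 : (u + y) / 2 < y := by linarith
    have hws : (u + y) / 2 ∈ s := hs.out hu hy ⟨hw1.le, hw2.le⟩
    have h1 : (f u - f y) / (u - y) < (f ((u + y) / 2) - f y) / ((u + y) / 2 - y) :=
      hf.secant_strict_mono hy hu hws hlt.ne hw2.ne hw1
    have h2 : (f ((u + y) / 2) - f y) / ((u + y) / 2 - y) ≤ c := H2 _ hws hw2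
    have hd : u - y < 0 := by linarith
    have hlt' : (f u - f y) / (u - y) < c := lt_of_lt_of_le h1 h2
    have hne' : u - y ≠ 0 := by intro h; exact absurd (by linarith [sub_eq_zero.1 h] : u = y) hne
    calc c * (u - y) < ((f u - f y) / (u - y)) * (u - y) :=
          mul_lt_mul_of_neg_right hlt' hd
      _ = f u - f y := div_mul_cancel₀ _ hne'
  · have hw1 : y < (y + u) / 2 := by linarith
    have hw2 : (y + u) / 2 < u := by linarith
    have hws : (y + u) / 2 ∈ s := hs.out hy hu ⟨hw1.le, hw2.le⟩
    have h1 : c ≤ (f ((y + u) / 2) - f y) / ((y + u) / 2 - y) := H1 _ hws hw1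
    have h2 : (f ((y + u) / 2) - f y) / ((y + u) / 2 - y) < (f u - f y) / (u - y) :=
      hf.secant_strict_mono hy hws hu hw1.ne' hgt.ne' hw2
    have hd : 0 < u - y := by linarith
    calc c * (u - y) < ((f u - f y) / (u - y)) * (u - y) :=
          mul_lt_mul_of_pos_right (lt_of_le_of_lt h1 h2) hd
      _ = f u - f y := div_mul_cancel₀ _ (ne_of_gt hd)

private lemma measurable_g_comp' {L : Set ℝ} {g : ℝ → ℝ → ℝ}
    (hgcont : ContinuousOn (fun p : ℝ × ℝ => g p.1 p.2) (L ×ˢ L))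
    {α : Type*} {mα : MeasurableSpace α} {x t : α → ℝ}
    (hx : Measurable x) (ht : Measurable t)
    (hxL : ∀ a, x a ∈ L) (htL : ∀ a, t a ∈ L) :
    Measurable fun a => g (x a) (t a) := by
  have hc : Continuous ((L ×ˢ L).restrict fun p : ℝ × ℝ => g p.1 p.2) := hgcont.restrict
  have hsub : Measurable fun a =>
      (⟨(x a, t a), Set.mk_mem_prod (hxL a) (htL a)⟩ : (L ×ˢ L : Set (ℝ × ℝ))) :=
    Measurable.subtype_mk (hx.prodMk ht)
  exact hc.measurable.comp hsub

private theorem aux_main {Ω : Type*} {m m0 : MeasurableSpace Ω} (hm : m ≤ m0)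
    (P : Measure Ω) [IsProbabilityMeasure P]
    (L : Set ℝ) (hL : L.OrdConnected)
    (g : ℝ → ℝ → ℝ)
    (hgcont : ContinuousOn (fun p : ℝ × ℝ => g p.1 p.2) (L ×ˢ L))
    (hgconv : ∀ s ∈ L, StrictConvexOn ℝ L (fun x => g x s))
    (t : Ω → ℝ) (htm : Measurable[m] t) (htL : ∀ ω, t ω ∈ L)
    (U : Ω → ℝ) (hUint : Integrable U P) (hUL : ∀ ω, U ω ∈ L)
    (hgint : Integrable (fun ω => g (U ω) (t ω)) P)
    (heq : ∀ᵐ ω ∂P, (P[(fun ω' => g (U ω') (t ω')) | m]) ω = g ((P[U | m]) ω) (t ω)) :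
    ∀ᵐ ω ∂P, U ω = (P[U | m]) ω := by
  classical
  rcases isEmpty_or_nonempty Ω with hΩ | hΩ
  · exact ae_of_all _ fun ω => isEmptyElim ω
  obtain ⟨ω₀⟩ := hΩ
  set Y : Ω → ℝ := P[U | m] with hY_def
  have hYsm : StronglyMeasurable[m] Y := stronglyMeasurable_condExp
  have hYm : Measurable[m] Y := hYsm.measurable
  have hYint : Integrable Y P := integrable_condExp
  -- a generic null-set criterion
  have key0 : ∀ (W Z : Ω → ℝ), Integrable W P → Integrable Z P → ∀ A : Set Ω, MeasurableSet A →
      (∫ ω in A, W ω ∂P = ∫ ω in A, Z ω ∂P) → (∀ ω ∈ A, W ω < Z ω) → P A = 0 := by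
    intro W Z hW hZ A hA hint hlt
    have h0 : ∫ ω in A, (Z ω - W ω) ∂P = 0 := by
      rw [integral_sub hZ.restrict hW.restrict, hint, sub_self]
    have hnn : 0 ≤ᵐ[P.restrict A] fun ω => Z ω - W ω :=
      (ae_restrict_iff' hA).2 (ae_of_all _ fun ω hω => sub_nonneg.2 (hlt ω hω).le)
    have hz : (fun ω => Z ω - W ω) =ᵐ[P.restrict A] 0 :=
      (integral_eq_zero_iff_of_nonneg_ae hnn ((hZ.sub hW).restrict)).1 h0
    have hbad : (P.restrict A) {ω | ¬ (Z ω - W ω = 0)} = 0 := by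
      have := ae_iff.1 hz; simpa using this
    have hsub : A ⊆ {ω | ¬ (Z ω - W ω = 0)} := fun ω hω => sub_ne_zero.2 (hlt ω hω).ne'
    refine le_zero_iff.1 ?_
    calc P A = (P.restrict A) A := (Measure.restrict_apply_self P A).symm
      _ ≤ (P.restrict A) {ω | ¬ (Z ω - W ω = 0)} := measure_mono hsub
      _ = 0 := hbad
  have keyB : ∀ r : ℝ, (∀ x ∈ L, r < x) → ∀ᵐ ω ∂P, r < Y ω := by
    intro r hr
    have hAm : MeasurableSet[m] {ω | Y ω ≤ r} := hYm measurableSet_Iic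
    have h0 : P {ω | Y ω ≤ r} = 0 :=
      key0 Y U hYint hUint _ (hm _ hAm) (setIntegral_condExp hm hUint hAm)
        (fun ω hω => lt_of_le_of_lt hω (hr _ (hUL ω)))
    rw [ae_iff]; simpa [not_lt] using h0
  have keyB' : ∀ r : ℝ, (∀ x ∈ L, x < r) → ∀ᵐ ω ∂P, Y ω < r := by
    intro r hr
    have hAm : MeasurableSet[m] {ω | r ≤ Y ω} := hYm measurableSet_Ici
    have h0 : P {ω | r ≤ Y ω} = 0 :=
      key0 U Y hUint hYint _ (hm _ hAm) (setIntegral_condExp hm hUint hAm).symm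
        (fun ω hω => lt_of_lt_of_le (hr _ (hUL ω)) hω)
    rw [ae_iff]; simpa [not_lt] using h0
  -- the conditional expectation stays in L a.e.
  have hYL : ∀ᵐ ω ∂P, Y ω ∈ L := by
    have E1 : ∀ᵐ ω ∂P, ∀ r : ℚ, (∀ x ∈ L, (r : ℝ) < x) → (r : ℝ) < Y ω := by
      rw [ae_all_iff]; intro r
      by_cases hr : ∀ x ∈ L, (r : ℝ) < x
      · exact (keyB r hr).mono fun ω h _ => h
      · exact ae_of_all _ fun ω h => absurd h hr
    have E2 : ∀ᵐ ω ∂P, (∀ x ∈ L, sInf L < x) → sInf L < Y ω := by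
      by_cases hr : ∀ x ∈ L, sInf L < x
      · exact (keyB _ hr).mono fun ω h _ => h
      · exact ae_of_all _ fun ω h => absurd h hr
    have E3 : ∀ᵐ ω ∂P, ∀ r : ℚ, (∀ x ∈ L, x < (r : ℝ)) → Y ω < (r : ℝ) := by
      rw [ae_all_iff]; intro r
      by_cases hr : ∀ x ∈ L, x < (r : ℝ)
      · exact (keyB' r hr).mono fun ω h _ => h
      · exact ae_of_all _ fun ω h => absurd h hr
    have E4 : ∀ᵐ ω ∂P, (∀ x ∈ L, x < sSup L) → Y ω < sSup L := by
      by_cases hr : ∀ x ∈ L, x < sSup L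
      · exact (keyB' _ hr).mono fun ω h _ => h
      · exact ae_of_all _ fun ω h => absurd h hr
    filter_upwards [E1, E2, E3, E4] with ω h1 h2 h3 h4
    by_contra hy
    have hcase : (∀ x ∈ L, Y ω < x) ∨ (∀ x ∈ L, x < Y ω) := by
      by_contra hc
      push_neg at hc
      obtain ⟨⟨x1, hx1L, hx1⟩, ⟨x2, hx2L, hx2⟩⟩ := hc
      exact hy (hL.out hx1L hx2L ⟨hx1, hx2⟩)
    rcases hcase with hb | ha
    · have hne : L.Nonempty := ⟨U ω, hUL ω⟩
      have hbdd : BddBelow L := ⟨Y ω, fun x hx => (hb x hx).le⟩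
      have hle : Y ω ≤ sInf L := le_csInf hne fun x hx => (hb x hx).le
      rcases eq_or_lt_of_le hle with heq' | hlt'
      · have : sInf L < Y ω := h2 (by rw [← heq']; exact hb)
        rw [← heq'] at this; exact lt_irrefl _ this
      · obtain ⟨r, hr1, hr2⟩ := exists_rat_btwn hlt'
        have : (r : ℝ) < Y ω := h1 r (fun x hx => lt_of_lt_of_le hr2 (csInf_le hbdd hx))
        linarith
    · have hne : L.Nonempty := ⟨U ω, hUL ω⟩
      have hbdd : BddAbove L := ⟨Y ω, fun x hx => (ha x hx).le⟩
      have hle : sSup L ≤ Y ω := csSup_le hne fun x hx => (ha x hx).le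
      rcases eq_or_lt_of_le hle with heq' | hlt'
      · have : Y ω < sSup L := h4 (by rw [heq']; exact ha)
        rw [heq'] at this; exact lt_irrefl _ this
      · obtain ⟨r, hr1, hr2⟩ := exists_rat_btwn hlt'
        have : Y ω < (r : ℝ) := h3 r (fun x hx => lt_of_le_of_lt (le_csSup hbdd hx) hr1)
        linarith
  -- modification of Y taking values in L everywhere
  set Y' : Ω → ℝ := fun ω => if Y ω ∈ L then Y ω else U ω₀ with hY'_def
  have hY'm : Measurable[m] Y' := Measurable.ite (hYm hL.measurableSet) hYm measurable_const
  have hY'L : ∀ ω, Y' ω ∈ L := by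
    intro ω
    by_cases h : Y ω ∈ L
    · simp only [hY'_def, if_pos h]; exact h
    · simp only [hY'_def, if_neg h]; exact hUL ω₀
  have hYY' : Y =ᵐ[P] Y' := by
    filter_upwards [hYL] with ω hω
    simp only [hY'_def, if_pos hω]
  have hY'int : Integrable Y' P := hYint.congr hYY'
  have hgY'eq : P[(fun ω' => g (U ω') (t ω')) | m] =ᵐ[P] fun ω => g (Y' ω) (t ω) := by
    filter_upwards [heq, hYY'] with ω h1 h2
    rw [h1, h2]
  have hgY'int : Integrable (fun ω => g (Y' ω) (t ω)) P := integrable_condExp.congr hgY'eq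
  -- comparison lemma on m-measurable sets
  have cmp : ∀ A : Set Ω, MeasurableSet[m] A →
      ((∀ ω ∈ A, U ω ≤ Y' ω) ∨ (∀ ω ∈ A, Y' ω ≤ U ω)) →
      ∀ᵐ ω ∂P, ω ∈ A → U ω = Y' ω := by
    intro A hA hdir
    have hA' : MeasurableSet A := hm A hA
    have hIA : ∫ ω in A, U ω ∂P = ∫ ω in A, Y' ω ∂P := by
      rw [← setIntegral_condExp hm hUint hA]
      exact setIntegral_congr_ae hA' (hYY'.mono fun ω h _ => h)
    rcases hdir with hle | hge
    · have h0 : ∫ ω in A, (Y' ω - U ω) ∂P = 0 := by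
        rw [integral_sub hY'int.restrict hUint.restrict, ← hIA, sub_self]
      have hnn : 0 ≤ᵐ[P.restrict A] fun ω => Y' ω - U ω :=
        (ae_restrict_iff' hA').2 (ae_of_all _ fun ω hω => sub_nonneg.2 (hle ω hω))
      have hz : (fun ω => Y' ω - U ω) =ᵐ[P.restrict A] 0 :=
        (integral_eq_zero_iff_of_nonneg_ae hnn ((hY'int.sub hUint).restrict)).1 h0
      have := (ae_restrict_iff' hA').1 hz
      filter_upwards [this] with ω h hω
      have h' := h hω
      simp only [Pi.zero_apply] at h'
      linarith
    · have h0 : ∫ ω in A, (U ω - Y' ω) ∂P = 0 := by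
        rw [integral_sub hUint.restrict hY'int.restrict, hIA, sub_self]
      have hnn : 0 ≤ᵐ[P.restrict A] fun ω => U ω - Y' ω :=
        (ae_restrict_iff' hA').2 (ae_of_all _ fun ω hω => sub_nonneg.2 (hge ω hω))
      have hz : (fun ω => U ω - Y' ω) =ᵐ[P.restrict A] 0 :=
        (integral_eq_zero_iff_of_nonneg_ae hnn ((hUint.sub hY'int).restrict)).1 h0
      have := (ae_restrict_iff' hA').1 hz
      filter_upwards [this] with ω h hω
      have h' := h hω
      simp only [Pi.zero_apply] at h'
      linarith
  -- main per-window statement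
  have main : ∀ p q : ℝ, p ∈ L → q ∈ L →
      ∀ᵐ ω ∂P, (p < Y' ω ∧ Y' ω < q) → U ω = Y' ω := by
    intro p q hp hq
    set A : Set Ω := {ω | p < Y' ω ∧ Y' ω < q} with hA_def
    have hAm : MeasurableSet[m] A := hY'm measurableSet_Ioo
    set b : ℕ → Ω → ℝ :=
      fun n ω => if p < Y' ω ∧ Y' ω < q then Y' ω + (q - Y' ω) / (n + 1) else Y' ω with hb_def
    have hbm : ∀ n, Measurable[m] (b n) := fun n =>
      Measurable.ite hAm (hY'm.add ((measurable_const.sub hY'm).div_const _)) hY'm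
    have hbL : ∀ n ω, b n ω ∈ L := by
      intro n ω
      by_cases h : p < Y' ω ∧ Y' ω < q
      · simp only [hb_def, if_pos h]
        have h1 : (0:ℝ) < (n:ℝ) + 1 := by positivity
        have h2 : (0:ℝ) ≤ q - Y' ω := by linarith [h.2]
        have hup : (q - Y' ω) / ((n:ℝ) + 1) ≤ q - Y' ω := div_le_self h2 (by linarith)
        refine hL.out (hY'L ω) hq ⟨?_, ?_⟩
        · linarith [div_nonneg h2 h1.le]
        · linarith
      · simp only [hb_def, if_neg h]; exact hY'L ω
    have hbgt : ∀ n ω, ω ∈ A → Y' ω < b n ω := by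
      intro n ω hω
      have hω' : p < Y' ω ∧ Y' ω < q := hω
      simp only [hb_def, if_pos hω']
      have : (0:ℝ) < (q - Y' ω) / ((n:ℝ) + 1) :=
        div_pos (by linarith [hω'.2]) (by positivity)
      linarith
    have hbanti : ∀ ω, ω ∈ A → ∀ n, b (n + 1) ω ≤ b n ω := by
      intro ω hω n
      have hω' : p < Y' ω ∧ Y' ω < q := hω
      simp only [hb_def, if_pos hω']
      have h2 : (0:ℝ) ≤ q - Y' ω := by linarith [hω'.2]
      have hn0 : (0:ℝ) ≤ (n:ℝ) := Nat.cast_nonneg n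
      have hd : (q - Y' ω) / ((n:ℝ) + 1 + 1) ≤ (q - Y' ω) / ((n:ℝ) + 1) := by
        rw [div_le_div_iff₀ (by linarith) (by linarith)]
        nlinarith
      push_cast
      linarith
    set cn : ℕ → Ω → ℝ :=
      fun n ω => (g (b n ω) (t ω) - g (Y' ω) (t ω)) / (b n ω - Y' ω) with hcn_def
    have hgm : ∀ x : Ω → ℝ, Measurable[m] x → (∀ ω, x ω ∈ L) →
        Measurable[m] fun ω => g (x ω) (t ω) :=
      fun x hx hxL => measurable_g_comp' hgcont hx htm hxL htL
    have hcnm : ∀ n, Measurable[m] (cn n) := fun n =>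
      ((hgm _ (hbm n) (hbL n)).sub (hgm _ hY'm hY'L)).div ((hbm n).sub hY'm)
    have hcnanti : ∀ ω ∈ A, ∀ n, cn (n + 1) ω ≤ cn n ω := by
      intro ω hω n
      exact (hgconv _ (htL ω)).convexOn.secant_mono (hY'L ω) (hbL (n+1) ω) (hbL n ω)
        (hbgt (n+1) ω hω).ne' (hbgt n ω hω).ne' (hbanti ω hω n)
    have hlb : ∀ ω ∈ A, ∀ n, (g p (t ω) - g (Y' ω) (t ω)) / (p - Y' ω) ≤ cn n ω := by
      intro ω hω n
      have hω' : p < Y' ω ∧ Y' ω < q := hω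
      exact (hgconv _ (htL ω)).convexOn.secant_mono (hY'L ω) hp (hbL n ω) hω'.1.ne
        (hbgt n ω hω).ne' (le_trans hω'.1.le (hbgt n ω hω).le)
    have hbdd : ∀ ω ∈ A, BddBelow (Set.range fun n => cn n ω) := by
      intro ω hω
      exact ⟨_, by rintro x ⟨n, rfl⟩; exact hlb ω hω n⟩
    set c : Ω → ℝ := fun ω => ⨅ n, cn n ω with hc_def
    have hcz : ∀ ω, ω ∉ A → ∀ n, cn n ω = 0 := by
      intro ω hω n
      have hb0 : b n ω = Y' ω := by
        simp only [hb_def, if_neg (show ¬(p < Y' ω ∧ Y' ω < q) from hω)]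
      simp [hcn_def, hb0]
    have htend : ∀ ω, Tendsto (fun n => cn n ω) atTop (𝓝 (c ω)) := by
      intro ω
      by_cases hω : ω ∈ A
      · exact tendsto_atTop_ciInf (antitone_nat_of_succ_le fun n => hcnanti ω hω n) (hbdd ω hω)
      · have h0 : ∀ n, cn n ω = 0 := hcz ω hω
        have hc0 : c ω = 0 := by simp only [hc_def]; simp [h0]
        rw [hc0]
        exact tendsto_const_nhds.congr fun n => (h0 n).symm
    have hcm : Measurable[m] c :=
      @measurable_of_tendsto_metrizable Ω ℝ m _ _ _ _ cn c hcnm (tendsto_pi_nhds.2 htend)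
    have hH1 : ∀ ω ∈ A, ∀ x ∈ L, Y' ω < x →
        c ω ≤ (g x (t ω) - g (Y' ω) (t ω)) / (x - Y' ω) := by
      intro ω hω x hx hxY
      have hω' : p < Y' ω ∧ Y' ω < q := hω
      obtain ⟨n, hn⟩ := exists_nat_ge ((q - Y' ω) / (x - Y' ω))
      have hxY' : (0:ℝ) < x - Y' ω := by linarith
      have h1 : q - Y' ω ≤ (n:ℝ) * (x - Y' ω) := (div_le_iff₀ hxY').1 hn
      have h2 : (q - Y' ω) / ((n:ℝ) + 1) ≤ x - Y' ω := by
        rw [div_le_iff₀ (by positivity : (0:ℝ) < (n:ℝ) + 1)]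
        nlinarith [hxY'.le]
      have hble : b n ω ≤ x := by
        simp only [hb_def, if_pos hω']
        linarith
      calc c ω ≤ cn n ω := ciInf_le (hbdd ω hω) n
        _ ≤ _ := (hgconv _ (htL ω)).convexOn.secant_mono (hY'L ω) (hbL n ω) hx
            (hbgt n ω hω).ne' hxY.ne' hble
    have hH2 : ∀ ω ∈ A, ∀ x ∈ L, x < Y' ω →
        (g x (t ω) - g (Y' ω) (t ω)) / (x - Y' ω) ≤ c ω := by
      intro ω hω x hx hxY
      refine le_ciInf fun n => ?_
      exact (hgconv _ (htL ω)).convexOn.secant_mono (hY'L ω) hx (hbL n ω) hxY.ne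
        (hbgt n ω hω).ne' (le_trans hxY.le (hbgt n ω hω).le)
    have hsub : ∀ ω ∈ A, ∀ u ∈ L, u ≠ Y' ω →
        c ω * (u - Y' ω) < g u (t ω) - g (Y' ω) (t ω) :=
      fun ω hω => subgrad_strict' hL (hgconv _ (htL ω)) (hY'L ω) (hH1 ω hω) (hH2 ω hω)
    have hnonneg : ∀ ω ∈ A, 0 ≤ g (U ω) (t ω) - g (Y' ω) (t ω) - c ω * (U ω - Y' ω) := by
      intro ω hω
      by_cases hUY : U ω = Y' ω
      · rw [hUY]; simp
      · linarith [hsub ω hω (U ω) (hUL ω) hUY]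
    have keyN : ∀ N : ℕ, ∀ᵐ ω ∂P, (ω ∈ A ∧ |c ω| ≤ (N:ℝ)) → U ω = Y' ω := by
      intro N
      set B : Set Ω := A ∩ {ω | |c ω| ≤ (N:ℝ)} with hB_def
      have hBm : MeasurableSet[m] B := hAm.inter ((measurable_abs.comp hcm) measurableSet_Iic)
      have hBm' : MeasurableSet B := hm B hBm
      set fN : Ω → ℝ := B.indicator c with hfN_def
      have hfNsm : StronglyMeasurable[m] fN := (hcm.indicator hBm).stronglyMeasurable
      have hfNbd : ∀ ω, ‖fN ω‖ ≤ (N:ℝ) := by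
        intro ω
        by_cases hω : ω ∈ B
        · simp only [hfN_def, indicator_of_mem hω, Real.norm_eq_abs]; exact hω.2
        · simp only [hfN_def, indicator_of_notMem hω, norm_zero]; positivity
      have hfNaesm : AEStronglyMeasurable fN P := (hfNsm.mono hm).aestronglyMeasurable
      have hfNU : Integrable (fN * U) P := hUint.bdd_mul hfNaesm (ae_of_all _ hfNbd)
      have hfNY' : Integrable (fun ω => fN ω * Y' ω) P := hY'int.bdd_mul hfNaesm (ae_of_all _ hfNbd)
      have hpull : P[fN * U | m] =ᵐ[P] fN * Y := condExp_mul_of_stronglyMeasurable_left hfNsm hfNU hUint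
      have hIU : ∫ ω, fN ω * U ω ∂P = ∫ ω, fN ω * Y' ω ∂P := by
        have h1 : ∫ ω, (P[fN * U | m]) ω ∂P = ∫ ω, (fN * U) ω ∂P := integral_condExp hm
        have h2 : ∫ ω, (P[fN * U | m]) ω ∂P = ∫ ω, (fN * Y) ω ∂P := integral_congr_ae hpull
        have h3 : ∫ ω, (fN * Y) ω ∂P = ∫ ω, fN ω * Y' ω ∂P := by
          refine integral_congr_ae ?_
          filter_upwards [hYY'] with ω h
          simp only [Pi.mul_apply]; rw [h]
        calc ∫ ω, fN ω * U ω ∂P = ∫ ω, (fN * U) ω ∂P := rfl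
          _ = ∫ ω, fN ω * Y' ω ∂P := by rw [← h1, h2, h3]
      have hI3 : ∫ ω, fN ω * (U ω - Y' ω) ∂P = 0 := by
        have hfe : (fun ω => fN ω * (U ω - Y' ω)) = fun ω => (fN * U) ω - fN ω * Y' ω := by
          funext ω; simp only [Pi.mul_apply]; ring
        rw [hfe, integral_sub hfNU hfNY']
        have h4 : ∫ ω, (fN * U) ω ∂P = ∫ ω, fN ω * U ω ∂P := rfl
        rw [h4, hIU, sub_self]
      have hI12 : ∫ ω in B, g (U ω) (t ω) ∂P = ∫ ω in B, g (Y' ω) (t ω) ∂P := by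
        rw [← setIntegral_condExp hm hgint hBm]
        exact setIntegral_congr_ae hBm' (hgY'eq.mono fun ω h _ => h)
      set Hf : Ω → ℝ :=
        B.indicator (fun ω => g (U ω) (t ω) - g (Y' ω) (t ω) - c ω * (U ω - Y' ω))
        with hHf_def
      have hHfeq : Hf = fun ω => B.indicator (fun ω' => g (U ω') (t ω')) ω
          - B.indicator (fun ω' => g (Y' ω') (t ω')) ω - fN ω * (U ω - Y' ω) := by
        funext ω
        by_cases hω : ω ∈ B
        · simp only [hHf_def, hfN_def, indicator_of_mem hω]
        · simp only [hHf_def, hfN_def, indicator_of_notMem hω, zero_mul]; ring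
      have hI1int : Integrable (B.indicator fun ω => g (U ω) (t ω)) P := hgint.indicator hBm'
      have hI2int : Integrable (B.indicator fun ω => g (Y' ω) (t ω)) P := hgY'int.indicator hBm'
      have hI3int : Integrable (fun ω => fN ω * (U ω - Y' ω)) P :=
        (hUint.sub hY'int).bdd_mul hfNaesm (ae_of_all _ hfNbd)
      have hI12int : Integrable (fun ω => B.indicator (fun ω' => g (U ω') (t ω')) ω
          - B.indicator (fun ω' => g (Y' ω') (t ω')) ω) P := hI1int.sub hI2int
      have hHint : Integrable Hf P := by
        rw [hHfeq]
        exact (hI12int.sub hI3int).congr (ae_of_all _ fun ω => rfl)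
      have hHnn : 0 ≤ Hf := by
        intro ω
        by_cases hω : ω ∈ B
        · simp only [hHf_def, Pi.zero_apply, indicator_of_mem hω]; exact hnonneg ω hω.1
        · simp only [hHf_def, Pi.zero_apply, indicator_of_notMem hω]; exact le_refl 0
      have hH0 : ∫ ω, Hf ω ∂P = 0 := by
        have e0 : ∫ ω, Hf ω ∂P = ∫ ω, (B.indicator (fun ω' => g (U ω') (t ω')) ω
            - B.indicator (fun ω' => g (Y' ω') (t ω')) ω - fN ω * (U ω - Y' ω)) ∂P := by
          rw [hHfeq]
        rw [e0, integral_sub hI12int hI3int, integral_sub hI1int hI2int,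
          integral_indicator hBm', integral_indicator hBm', hI12, hI3, sub_self, sub_zero]
      have hae : Hf =ᵐ[P] 0 := (integral_eq_zero_iff_of_nonneg hHnn hHint).1 hH0
      filter_upwards [hae] with ω hω hmem
      have hωB : ω ∈ B := ⟨hmem.1, hmem.2⟩
      have h0 : g (U ω) (t ω) - g (Y' ω) (t ω) - c ω * (U ω - Y' ω) = 0 := by
        have h' := hω
        simpa [hHf_def, indicator_of_mem hωB] using h'
      by_contra hne
      have := hsub ω hmem.1 (U ω) (hUL ω) hne
      linarith
    have hallN : ∀ᵐ ω ∂P, ∀ N : ℕ, (ω ∈ A ∧ |c ω| ≤ (N:ℝ)) → U ω = Y' ω := ae_all_iff.2 keyN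
    filter_upwards [hallN] with ω h hω
    obtain ⟨N, hN⟩ := exists_nat_ge |c ω|
    exact h N ⟨hω, hN⟩
  -- extreme cases
  have hmax : ∀ᵐ ω ∂P, (∀ x ∈ L, x ≤ Y' ω) → U ω = Y' ω := by
    set Gx : Set Ω := ⋂ (r : ℚ) (_ : (r : ℝ) ∈ L), {ω | (r : ℝ) ≤ Y' ω} with hGx_def
    have hGxm : MeasurableSet[m] Gx :=
      MeasurableSet.iInter fun r => MeasurableSet.iInter fun _ => hY'm measurableSet_Ici
    have hmem : ∀ ω, (∀ x ∈ L, x ≤ Y' ω) ↔ ω ∈ Gx := by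
      intro ω
      constructor
      · intro h
        simp only [hGx_def, mem_iInter, mem_setOf_eq]
        intro r hr; exact h _ hr
      · intro h x hx
        by_contra hxY
        push_neg at hxY
        obtain ⟨r, hr1, hr2⟩ := exists_rat_btwn hxY
        have hrL : (r : ℝ) ∈ L := hL.out (hY'L ω) hx ⟨hr1.le, hr2.le⟩
        simp only [hGx_def, mem_iInter, mem_setOf_eq] at h
        linarith [h r hrL]
    have hUle : ∀ ω ∈ Gx, U ω ≤ Y' ω := fun ω hω => ((hmem ω).2 hω) _ (hUL ω)
    filter_upwards [cmp Gx hGxm (Or.inl hUle)] with ω h hub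
    exact h ((hmem ω).1 hub)
  have hmin : ∀ᵐ ω ∂P, (∀ x ∈ L, Y' ω ≤ x) → U ω = Y' ω := by
    set Gn : Set Ω := ⋂ (r : ℚ) (_ : (r : ℝ) ∈ L), {ω | Y' ω ≤ (r : ℝ)} with hGn_def
    have hGnm : MeasurableSet[m] Gn :=
      MeasurableSet.iInter fun r => MeasurableSet.iInter fun _ => hY'm measurableSet_Iic
    have hmem : ∀ ω, (∀ x ∈ L, Y' ω ≤ x) ↔ ω ∈ Gn := by
      intro ω
      constructor
      · intro h
        simp only [hGn_def, mem_iInter, mem_setOf_eq]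
        intro r hr; exact h _ hr
      · intro h x hx
        by_contra hxY
        push_neg at hxY
        obtain ⟨r, hr1, hr2⟩ := exists_rat_btwn hxY
        have hrL : (r : ℝ) ∈ L := hL.out hx (hY'L ω) ⟨hr1.le, hr2.le⟩
        simp only [hGn_def, mem_iInter, mem_setOf_eq] at h
        linarith [h r hrL]
    have hUge : ∀ ω ∈ Gn, Y' ω ≤ U ω := fun ω hω => ((hmem ω).2 hω) _ (hUL ω)
    filter_upwards [cmp Gn hGnm (Or.inr hUge)] with ω h hub
    exact h ((hmem ω).1 hub)
  have hall : ∀ᵐ ω ∂P, ∀ p q : ℚ, (p : ℝ) ∈ L → (q : ℝ) ∈ L →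
      (((p : ℝ) < Y' ω ∧ Y' ω < (q : ℝ)) → U ω = Y' ω) := by
    rw [ae_all_iff]; intro p
    rw [ae_all_iff]; intro q
    by_cases hp : (p : ℝ) ∈ L
    · by_cases hq : (q : ℝ) ∈ L
      · filter_upwards [main p q hp hq] with ω h hp' hq' hw
        exact h hw
      · exact ae_of_all _ fun ω hp' hq' => absurd hq' hq
    · exact ae_of_all _ fun ω hp' => absurd hp' hp
  filter_upwards [hall, hmax, hmin, hYY'] with ω h1 h2 h3 h4
  rw [h4]
  by_cases hub : ∀ x ∈ L, x ≤ Y' ω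
  · exact h2 hub
  by_cases hlb : ∀ x ∈ L, Y' ω ≤ x
  · exact h3 hlb
  push_neg at hub hlb
  obtain ⟨x1, hx1L, hx1⟩ := hub
  obtain ⟨x2, hx2L, hx2⟩ := hlb
  obtain ⟨q, hq1, hq2⟩ := exists_rat_btwn hx1
  obtain ⟨p, hp1, hp2⟩ := exists_rat_btwn hx2
  have hqL : (q : ℝ) ∈ L := hL.out (hY'L ω) hx1L ⟨hq1.le, hq2.le⟩
  have hpL : (p : ℝ) ∈ L := hL.out hx2L (hY'L ω) ⟨hp1.le, hp2.le⟩
  exact h1 p q hpL hqL ⟨hp2, hq1⟩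

/-- **equality case of conditional Jensen for strictly convex `g`.** If `U` is
square-integrable, `L`-valued, `g(U, τ(V))` is integrable, `g(·,t)` is strictly convex for each
`t ∈ L`, and `E[g(U, τ(V)) ∥ σ(V)] = g(E[U ∥ σ(V)], τ(V))` a.e., then `U = E[U ∥ σ(V)]` a.e.;
in particular `U` is almost surely a (measurable) function of `V`. -/
theorem conditional_jensen_strict_equality
    {Ω : Type*} [MeasurableSpace Ω] (P : Measure Ω) [IsProbabilityMeasure P]
    {β : Type*} [mβ : MeasurableSpace β]
    (L : Set ℝ) (hL : L.OrdConnected)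
    (g : ℝ → ℝ → ℝ)
    (hgcont : ContinuousOn (fun p : ℝ × ℝ => g p.1 p.2) (L ×ˢ L))
    (hgconv : ∀ t ∈ L, StrictConvexOn ℝ L (fun x => g x t))
    (V : Ω → β) (hV : Measurable V)
    (τ : β → ℝ) (hτ : Measurable τ) (hτL : ∀ b, τ b ∈ L)
    (U : Ω → ℝ) (hUsq : MemLp U 2 P) (hUL : ∀ ω, U ω ∈ L)
    (hgint : Integrable (fun ω => g (U ω) (τ (V ω))) P)
    (heq : ∀ᵐ ω ∂P,
      (P[(fun ω' => g (U ω') (τ (V ω'))) | MeasurableSpace.comap V mβ]) ω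
        = g ((P[U | MeasurableSpace.comap V mβ]) ω) (τ (V ω))) :
    ∀ᵐ ω ∂P, U ω = (P[U | MeasurableSpace.comap V mβ]) ω :=
  aux_main hV.comap_le P L hL g hgcont hgconv
    (fun ω => τ (V ω)) (hτ.comp (comap_measurable V)) (fun ω => hτL (V ω))
    U (hUsq.integrable one_le_two) hUL hgint heq
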